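/- Let μ₀ ∈ M₊(X⁰) and μ, ν ∈ M₊(X) be finite positive Borel measures satisfying the discrete Liouville equation μ + ν = f_#ν + μ₀ (as measures on ℝ^n). Then μ(X \ X^∞) = 0; in particular the support of μ is contained in the closure of X^∞. -/

import Mathlib

open MeasureTheory

/-- If `μ₀ ∈ M₊(X⁰)` and `μ, ν ∈ M₊(X)` satisfy the discrete Liouville equation
`μ + ν = f_# ν + μ₀`, then `μ(X \ X^∞) = 0`; in particular the support of `μ` is
contained in the closure of `X^∞`. -/
theorem support_in_closure_reachable (n : ℕ) (hn : 1 ≤ n)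
    (f : (Fin n → ℝ) → (Fin n → ℝ))
    (hfpoly : ∀ i, ∃ p : MvPolynomial (Fin n) ℝ, ∀ x, f x i = MvPolynomial.eval x p)
    (X0 X : Set (Fin n → ℝ)) (hX0 : IsCompact X0) (hX : IsCompact X)
    (hreach : (⋃ t : ℕ, f^[t] '' X0) ⊆ X)
    (μ₀ μ ν : Measure (Fin n → ℝ))
    [IsFiniteMeasure μ₀] [IsFiniteMeasure μ] [IsFiniteMeasure ν]
    (hμ₀ : μ₀ X0ᶜ = 0) (hμ : μ Xᶜ = 0) (hν : ν Xᶜ = 0)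
    (hliou : μ + ν = Measure.map f ν + μ₀) :
    μ (X \ ⋃ t : ℕ, f^[t] '' X0) = 0 ∧
      μ (closure (⋃ t : ℕ, f^[t] '' X0))ᶜ = 0 := by
  have hfc : Continuous f := by
    apply continuous_pi
    intro i
    obtain ⟨p, hp⟩ := hfpoly i
    have : (fun x => f x i) = fun x => MvPolynomial.eval x p := funext hp
    rw [this]
    exact p.continuous_eval
  set A : Set (Fin n → ℝ) := ⋃ t : ℕ, f^[t] '' X0 with hA
  have hAm : MeasurableSet A :=
    MeasurableSet.iUnion fun t =>
      ((hX0.image (hfc.iterate t)).isClosed).measurableSet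
  have hX0A : X0 ⊆ A := by
    intro x hx
    exact Set.mem_iUnion.2 ⟨0, ⟨x, hx, rfl⟩⟩
  have hfAA : A ⊆ f ⁻¹' A := by
    intro x hx
    obtain ⟨t, y, hy, rfl⟩ := Set.mem_iUnion.1 hx
    exact Set.mem_iUnion.2 ⟨t + 1, ⟨y, hy, Function.iterate_succ_apply' f t y⟩⟩
  have hpre : f ⁻¹' Aᶜ ⊆ Aᶜ := fun x hx hxA => hx (hfAA hxA)
  have hμ₀A : μ₀ Aᶜ = 0 :=
    le_antisymm (hμ₀ ▸ measure_mono (Set.compl_subset_compl.2 hX0A)) (zero_le)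
  have key : μ Aᶜ + ν Aᶜ ≤ ν Aᶜ := by
    have h1 : (μ + ν) Aᶜ = (Measure.map f ν + μ₀) Aᶜ := by rw [hliou]
    rw [Measure.add_apply, Measure.add_apply,
      Measure.map_apply hfc.measurable hAm.compl, hμ₀A, add_zero] at h1
    calc μ Aᶜ + ν Aᶜ = ν (f ⁻¹' Aᶜ) := h1
      _ ≤ ν Aᶜ := measure_mono hpre
  have hμA : μ Aᶜ = 0 := by
    have h2 : μ Aᶜ + ν Aᶜ ≤ 0 + ν Aᶜ := by rwa [zero_add]
    have := (ENNReal.add_le_add_iff_right (measure_ne_top ν Aᶜ)).1 h2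
    exact le_antisymm this (zero_le)
  constructor
  · exact le_antisymm (hμA ▸ measure_mono (Set.diff_subset_compl X A)) (zero_le)
  · exact le_antisymm
      (hμA ▸ measure_mono (Set.compl_subset_compl.2 subset_closure)) (zero_le)
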